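/- Let h^δ: ℝ → ℝ be defined for δ ∈ (0, 1/2) by h^δ(r) = r log δ − δ/2 + r²/(2δ) for r < δ, h^δ(r) = r log r for δ ≤ r ≤ 1−δ, and h^δ(r) = r log(1−δ) − (1−δ)/2 + r²/(2(1−δ)) for r > 1−δ. Then h^δ is twice continuously differentiable on ℝ with (h^δ)''(r) = 1/χ_δ(r), where χ_δ(r) = max(δ, min(r, 1−δ)). In particular, h^δ is convex. -/

import Mathlib

/-- The regularized entropy density `h^δ`. -/
noncomputable def hdel (δ : ℝ) (r : ℝ) : ℝ :=
  if r < δ then r * Real.log δ - δ / 2 + r ^ 2 / (2 * δ)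
  else if r ≤ 1 - δ then r * Real.log r
  else r * Real.log (1 - δ) - (1 - δ) / 2 + r ^ 2 / (2 * (1 - δ))

/-- The first derivative of `hdel`. -/
noncomputable def gdel (δ : ℝ) (r : ℝ) : ℝ :=
  if r ≤ δ then Real.log δ + r / δ
  else if r ≤ 1 - δ then Real.log r + 1
  else Real.log (1 - δ) + r / (1 - δ)

section aux

variable {δ : ℝ} (hδ0 : 0 < δ) (hδ1 : δ < 1 / 2)

lemma hasDerivAt_left (x : ℝ) (hδ0 : 0 < δ) :
    HasDerivAt (fun r : ℝ => r * Real.log δ - δ / 2 + r ^ 2 / (2 * δ))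
      (Real.log δ + x / δ) x := by
  have h1 := ((hasDerivAt_id x).mul_const (Real.log δ)).sub_const (δ / 2)
  have h2 := (hasDerivAt_pow 2 x).div_const (2 * δ)
  have := h1.add h2
  refine this.congr_deriv ?_
  have hδ : (δ : ℝ) ≠ 0 := ne_of_gt hδ0
  field_simp
  ring

lemma hasDerivAt_right (x : ℝ) (h1δ : 0 < 1 - δ) :
    HasDerivAt (fun r : ℝ => r * Real.log (1 - δ) - (1 - δ) / 2 + r ^ 2 / (2 * (1 - δ)))
      (Real.log (1 - δ) + x / (1 - δ)) x := by
  have h1 := ((hasDerivAt_id x).mul_const (Real.log (1 - δ))).sub_const ((1 - δ) / 2)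
  have h2 := (hasDerivAt_pow 2 x).div_const (2 * (1 - δ))
  have := h1.add h2
  refine this.congr_deriv ?_
  have hδ : (1 - δ : ℝ) ≠ 0 := ne_of_gt h1δ
  field_simp
  ring

lemma hdel_eq_mid (hδ0 : 0 < δ) {x : ℝ} (hx1 : δ ≤ x) (hx2 : x ≤ 1 - δ) :
    hdel δ x = x * Real.log x := by
  simp [hdel, not_lt.mpr hx1, hx2]

lemma hdel_eq_left (hδ0 : 0 < δ) (hδ1 : δ < 1 / 2) {x : ℝ} (hx : x ≤ δ) :
    hdel δ x = x * Real.log δ - δ / 2 + x ^ 2 / (2 * δ) := by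
  rcases lt_or_eq_of_le hx with h | heq
  · simp [hdel, h]
  · subst heq
    have hδ : (x : ℝ) ≠ 0 := ne_of_gt hδ0
    rw [hdel_eq_mid hδ0 le_rfl (by linarith)]
    field_simp
    ring

lemma hdel_eq_right (hδ0 : 0 < δ) (hδ1 : δ < 1 / 2) {x : ℝ} (hx : 1 - δ ≤ x) :
    hdel δ x = x * Real.log (1 - δ) - (1 - δ) / 2 + x ^ 2 / (2 * (1 - δ)) := by
  have hne : (1 - δ : ℝ) ≠ 0 := ne_of_gt (by linarith : (0:ℝ) < 1 - δ)
  rcases lt_or_eq_of_le hx with h | heq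
  · have h1 : ¬ x < δ := by linarith
    have h2 : ¬ x ≤ 1 - δ := not_le.mpr h
    simp [hdel, h1, h2]
  · rw [← heq, hdel_eq_mid hδ0 (by linarith) le_rfl]
    field_simp
    ring

lemma gdel_eq_left {x : ℝ} (hx : x ≤ δ) : gdel δ x = Real.log δ + x / δ := by
  simp [gdel, hx]

lemma gdel_eq_mid (hδ0 : 0 < δ) {x : ℝ} (hx1 : δ ≤ x) (hx2 : x ≤ 1 - δ) :
    gdel δ x = Real.log x + 1 := by
  rcases lt_or_eq_of_le hx1 with h | heq
  · simp [gdel, not_le.mpr h, hx2]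
  · subst heq
    have hne : (δ:ℝ) ≠ 0 := ne_of_gt hδ0
    simp [gdel, le_refl, div_self hne]

lemma gdel_eq_right (hδ0 : 0 < δ) (hδ1 : δ < 1 / 2) {x : ℝ} (hx : 1 - δ ≤ x) :
    gdel δ x = Real.log (1 - δ) + x / (1 - δ) := by
  have hne : (1 - δ : ℝ) ≠ 0 := by
    have : δ < 1 - δ := by linarith
    intro h; rw [sub_eq_zero] at h; nlinarith
  rcases lt_or_eq_of_le hx with h | heq
  · have h1 : ¬ x ≤ δ := by push_neg; linarith
    have h2 : ¬ x ≤ 1 - δ := not_le.mpr h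
    simp [gdel, h1, h2]
  · rw [← heq, gdel_eq_mid hδ0 (by linarith) le_rfl, div_self hne]

lemma hasDerivAt_hdel (hδ0 : 0 < δ) (hδ1 : δ < 1 / 2) (r : ℝ) :
    HasDerivAt (hdel δ) (gdel δ r) r := by
  have hlt : δ < 1 - δ := by linarith
  have h1δ : (0:ℝ) < 1 - δ := by linarith
  rcases lt_trichotomy r δ with h | heq | h
  · -- left region
    rw [gdel_eq_left h.le]
    refine (hasDerivAt_left r hδ0).congr_of_eventuallyEq ?_
    filter_upwards [Iio_mem_nhds h] with x hx
    exact hdel_eq_left hδ0 hδ1 (le_of_lt hx)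
  · -- boundary r = δ
    subst heq
    rw [gdel_eq_left le_rfl]
    have hval : Real.log r + r / r = Real.log r + 1 := by
      rw [div_self (ne_of_gt hδ0)]
    have hIic : HasDerivWithinAt (hdel r) (Real.log r + r / r) (Set.Iic r) r := by
      refine ((hasDerivAt_left r hδ0).hasDerivWithinAt).congr_of_eventuallyEq ?_ ?_
      · filter_upwards [self_mem_nhdsWithin] with x hx
        exact hdel_eq_left hδ0 hδ1 hx
      · exact hdel_eq_left hδ0 hδ1 le_rfl
    have hIci : HasDerivWithinAt (hdel r) (Real.log r + r / r) (Set.Ici r) r := by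
      rw [hval]
      refine ((Real.hasDerivAt_mul_log (ne_of_gt hδ0)).hasDerivWithinAt).congr_of_eventuallyEq
        ?_ (hdel_eq_mid hδ0 le_rfl hlt.le)
      filter_upwards [self_mem_nhdsWithin,
        nhdsWithin_le_nhds (Iio_mem_nhds hlt)] with x hx1 hx2
      exact hdel_eq_mid hδ0 hx1 (le_of_lt hx2)
    have := hIic.union hIci
    rwa [Set.Iic_union_Ici, hasDerivWithinAt_univ] at this
  · rcases lt_trichotomy r (1 - δ) with h2 | rfl | h2
    · -- middle region
      rw [gdel_eq_mid hδ0 h.le h2.le]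
      have hr0 : (r:ℝ) ≠ 0 := ne_of_gt (hδ0.trans h)
      refine (Real.hasDerivAt_mul_log hr0).congr_of_eventuallyEq ?_
      filter_upwards [Ioo_mem_nhds h h2] with x hx
      exact hdel_eq_mid hδ0 hx.1.le hx.2.le
    · -- boundary r = 1 - δ
      rw [gdel_eq_mid hδ0 h.le le_rfl]
      have hne : (1 - δ : ℝ) ≠ 0 := ne_of_gt h1δ
      have hIic : HasDerivWithinAt (hdel δ) (Real.log (1 - δ) + 1) (Set.Iic (1 - δ)) (1 - δ) := by
        refine ((Real.hasDerivAt_mul_log hne).hasDerivWithinAt).congr_of_eventuallyEq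
          ?_ (hdel_eq_mid hδ0 h.le le_rfl)
        filter_upwards [self_mem_nhdsWithin,
          nhdsWithin_le_nhds (Ioi_mem_nhds h)] with x hx1 hx2
        exact hdel_eq_mid hδ0 (le_of_lt hx2) hx1
      have hIci : HasDerivWithinAt (hdel δ) (Real.log (1 - δ) + 1) (Set.Ici (1 - δ)) (1 - δ) := by
        have hval : Real.log (1 - δ) + (1 - δ) / (1 - δ) = Real.log (1 - δ) + 1 := by
          rw [div_self hne]
        rw [← hval]
        refine ((hasDerivAt_right (1 - δ) h1δ).hasDerivWithinAt).congr_of_eventuallyEq ?_ ?_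
        · filter_upwards [self_mem_nhdsWithin] with x hx
          exact hdel_eq_right hδ0 hδ1 hx
        · exact hdel_eq_right hδ0 hδ1 le_rfl
      have := hIic.union hIci
      rwa [Set.Iic_union_Ici, hasDerivWithinAt_univ] at this
    · -- right region
      rw [gdel_eq_right hδ0 hδ1 h2.le]
      refine (hasDerivAt_right r h1δ).congr_of_eventuallyEq ?_
      filter_upwards [Ioi_mem_nhds h2] with x hx
      exact hdel_eq_right hδ0 hδ1 (le_of_lt hx)

lemma hasDerivAt_gdel (hδ0 : 0 < δ) (hδ1 : δ < 1 / 2) (r : ℝ) :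
    HasDerivAt (gdel δ) (1 / max δ (min r (1 - δ))) r := by
  have hlt : δ < 1 - δ := by linarith
  have h1δ : (0:ℝ) < 1 - δ := by linarith
  have hLd : ∀ x : ℝ, HasDerivAt (fun r : ℝ => Real.log δ + r / δ) (1 / δ) x := by
    intro x
    have := ((hasDerivAt_id x).div_const δ).const_add (Real.log δ)
    simpa [one_div] using this
  have hRd : ∀ x : ℝ, HasDerivAt (fun r : ℝ => Real.log (1 - δ) + r / (1 - δ))
      (1 / (1 - δ)) x := by
    intro x
    have := ((hasDerivAt_id x).div_const (1 - δ)).const_add (Real.log (1 - δ))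
    simpa [one_div] using this
  have hMd : ∀ x : ℝ, x ≠ 0 → HasDerivAt (fun r : ℝ => Real.log r + 1) x⁻¹ x := by
    intro x hx
    exact (Real.hasDerivAt_log hx).add_const 1
  rcases lt_trichotomy r δ with h | heq | h
  · have hmax : max δ (min r (1 - δ)) = δ := by
      rw [min_eq_left (by linarith), max_eq_left h.le]
    rw [hmax]
    refine (hLd r).congr_of_eventuallyEq ?_
    filter_upwards [Iio_mem_nhds h] with x hx
    exact gdel_eq_left (le_of_lt hx)
  · subst heq
    have hmax : max r (min r (1 - r)) = r := by
      rw [min_eq_left hlt.le, max_self]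
    rw [hmax]
    have hIic : HasDerivWithinAt (gdel r) (1 / r) (Set.Iic r) r := by
      refine ((hLd r).hasDerivWithinAt).congr_of_eventuallyEq ?_ (gdel_eq_left le_rfl)
      filter_upwards [self_mem_nhdsWithin] with x hx
      exact gdel_eq_left hx
    have hIci : HasDerivWithinAt (gdel r) (1 / r) (Set.Ici r) r := by
      rw [one_div]
      refine ((hMd r (ne_of_gt hδ0)).hasDerivWithinAt).congr_of_eventuallyEq
        ?_ (gdel_eq_mid hδ0 le_rfl hlt.le)
      filter_upwards [self_mem_nhdsWithin,
        nhdsWithin_le_nhds (Iio_mem_nhds hlt)] with x hx1 hx2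
      exact gdel_eq_mid hδ0 hx1 (le_of_lt hx2)
    have := hIic.union hIci
    rwa [Set.Iic_union_Ici, hasDerivWithinAt_univ] at this
  · rcases lt_trichotomy r (1 - δ) with h2 | rfl | h2
    · have hmax : max δ (min r (1 - δ)) = r := by
        rw [min_eq_left h2.le, max_eq_right h.le]
      rw [hmax, one_div]
      refine (hMd r (ne_of_gt (hδ0.trans h))).congr_of_eventuallyEq ?_
      filter_upwards [Ioo_mem_nhds h h2] with x hx
      exact gdel_eq_mid hδ0 hx.1.le hx.2.le
    · have hmax : max δ (min (1 - δ) (1 - δ)) = 1 - δ := by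
        rw [min_self, max_eq_right hlt.le]
      rw [hmax]
      have hne : (1 - δ : ℝ) ≠ 0 := ne_of_gt h1δ
      have hIic : HasDerivWithinAt (gdel δ) (1 / (1 - δ)) (Set.Iic (1 - δ)) (1 - δ) := by
        rw [one_div]
        refine ((hMd (1 - δ) hne).hasDerivWithinAt).congr_of_eventuallyEq
          ?_ (gdel_eq_mid hδ0 h.le le_rfl)
        filter_upwards [self_mem_nhdsWithin,
          nhdsWithin_le_nhds (Ioi_mem_nhds h)] with x hx1 hx2
        exact gdel_eq_mid hδ0 (le_of_lt hx2) hx1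
      have hIci : HasDerivWithinAt (gdel δ) (1 / (1 - δ)) (Set.Ici (1 - δ)) (1 - δ) := by
        refine ((hRd (1 - δ)).hasDerivWithinAt).congr_of_eventuallyEq
          ?_ (gdel_eq_right hδ0 hδ1 le_rfl)
        filter_upwards [self_mem_nhdsWithin] with x hx
        exact gdel_eq_right hδ0 hδ1 hx
      have := hIic.union hIci
      rwa [Set.Iic_union_Ici, hasDerivWithinAt_univ] at this
    · have hmax : max δ (min r (1 - δ)) = 1 - δ := by
        rw [min_eq_right h2.le, max_eq_right hlt.le]
      rw [hmax]
      refine (hRd r).congr_of_eventuallyEq ?_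
      filter_upwards [Ioi_mem_nhds h2] with x hx
      exact gdel_eq_right hδ0 hδ1 (le_of_lt hx)

end aux

theorem hdel_C2_convex (δ : ℝ) (hδ0 : 0 < δ) (hδ1 : δ < 1 / 2) :
    ContDiff ℝ 2 (hdel δ) ∧
    (∀ r : ℝ, iteratedDeriv 2 (hdel δ) r = 1 / max δ (min r (1 - δ))) ∧
    ConvexOn ℝ Set.univ (hdel δ) := by
  have key1 : ∀ r : ℝ, HasDerivAt (hdel δ) (gdel δ r) r := hasDerivAt_hdel hδ0 hδ1
  have key2 : ∀ r : ℝ, HasDerivAt (gdel δ) (1 / max δ (min r (1 - δ))) r :=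
    hasDerivAt_gdel hδ0 hδ1
  have hderiv : deriv (hdel δ) = gdel δ := funext fun r => (key1 r).deriv
  have hderiv2 : deriv (gdel δ) = fun r => 1 / max δ (min r (1 - δ)) :=
    funext fun r => (key2 r).deriv
  have hmaxpos : ∀ r : ℝ, 0 < max δ (min r (1 - δ)) := fun r => lt_max_of_lt_left hδ0
  have hcont : Continuous fun r : ℝ => 1 / max δ (min r (1 - δ)) := by
    apply Continuous.div continuous_const
      (continuous_const.max (continuous_id.min continuous_const))
    exact fun r => ne_of_gt (hmaxpos r)
  have hC2 : ContDiff ℝ 2 (hdel δ) := by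
    rw [show (2 : WithTop ℕ∞) = 1 + 1 from rfl, contDiff_succ_iff_deriv]
    refine ⟨fun r => (key1 r).differentiableAt, by simp, ?_⟩
    rw [hderiv, contDiff_one_iff_deriv]
    exact ⟨fun r => (key2 r).differentiableAt, hderiv2 ▸ hcont⟩
  refine ⟨hC2, ?_, ?_⟩
  · intro r
    rw [iteratedDeriv_succ, iteratedDeriv_one, hderiv, hderiv2]
  · apply convexOn_univ_of_deriv2_nonneg (fun r => (key1 r).differentiableAt)
    · rw [hderiv]; exact fun r => (key2 r).differentiableAt
    · intro x
      have : deriv^[2] (hdel δ) x = deriv (deriv (hdel δ)) x := by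
        simp [Function.iterate_succ_apply']
      rw [this, hderiv, hderiv2]
      exact le_of_lt (by positivity)
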